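/- Let Σ = {0,1,2} with the standard metric d(a,b)=|a−b|, let α, k be positive integers, and define Z(1) = 0^α 1^α 2^α and Z(0) = 0^α 1 2^α. For a binary string x of length k, let A(x) = Z(x₁)∘⋯∘Z(x_k), and for i ∈ [k] let B(i) = (012)^{i−1} ∘ (02) ∘ (012)^{k−i}. If x_i = 0, then dtw(A(x), B(i)) ≤ 1. -/

import Mathlib

/-- `xb` is an expansion of `x`: each letter of `x` is duplicated in place a positive
number of times. -/
def IsExpansion {α : Type*} (x xb : List α) : Prop :=
  ∃ ks : List ℕ, ks.length = x.length ∧ (∀ k ∈ ks, 0 < k) ∧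
    xb = (List.zipWith (fun a k => List.replicate k a) x ks).flatten

/-- `(xb, yb)` is a correspondence between `x` and `y`: a pair of equal-length expansions. -/
def IsCorrespondence {α : Type*} (x y xb yb : List α) : Prop :=
  IsExpansion x xb ∧ IsExpansion y yb ∧ xb.length = yb.length

/-- The cost of a correspondence: summed distances of aligned letters. -/
noncomputable def corrCost {α : Type*} (δ : α → α → ℝ) (xb yb : List α) : ℝ :=
  (List.zipWith δ xb yb).sum

/-- Dynamic time warping distance with respect to a distance function `δ`. -/
noncomputable def dtw {α : Type*} (δ : α → α → ℝ) (x y : List α) : ℝ :=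
  sInf {c | ∃ xb yb, IsCorrespondence x y xb yb ∧ c = corrCost δ xb yb}

/-- Generalized Hamming distance on letters. -/
noncomputable def hamDist {α : Type*} [DecidableEq α] (a b : α) : ℝ := if a = b then 0 else 1

/-- DTW over generalized Hamming space. -/
noncomputable def dtw0 {α : Type*} [DecidableEq α] (x y : List α) : ℝ := dtw hamDist x y

/-- Alice's gadget: Z(1) = 0^α 1^α 2^α and Z(0) = 0^α 1 2^α. -/
def Zgadget (a : ℕ) : Bool → List ℤ
  | true => List.replicate a 0 ++ List.replicate a 1 ++ List.replicate a 2
  | false => List.replicate a 0 ++ [1] ++ List.replicate a 2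

/-- Alice's string A(x) = Z(x₁) ∘ ⋯ ∘ Z(x_k). -/
def Astr (a k : ℕ) (x : Fin k → Bool) : List ℤ :=
  (List.ofFn fun j => Zgadget a (x j)).flatten

/-- Bob's string B(i) = (012)^{i-1} ∘ (02) ∘ (012)^{k-i} (i zero-indexed here). -/
def Bstr (k : ℕ) (i : Fin k) : List ℤ :=
  (List.replicate (i : ℕ) ([0, 1, 2] : List ℤ)).flatten ++ [0, 2] ++
    (List.replicate (k - 1 - (i : ℕ)) ([0, 1, 2] : List ℤ)).flatten

def ExC (x y : List ℤ) (c : ℝ) : Prop :=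
  ∃ xb yb, IsCorrespondence x y xb yb ∧ corrCost dist xb yb ≤ c

lemma isExpansion_append {x y xb yb : List ℤ} (hx : IsExpansion x xb) (hy : IsExpansion y yb) :
    IsExpansion (x ++ y) (xb ++ yb) := by
  obtain ⟨ks, hlen, hpos, hxb⟩ := hx
  obtain ⟨ls, hlen', hpos', hyb⟩ := hy
  refine ⟨ks ++ ls, by simp [hlen, hlen'], ?_, ?_⟩
  · intro k hk; rcases List.mem_append.1 hk with h | h
    exacts [hpos k h, hpos' k h]
  · rw [List.zipWith_append hlen.symm, List.flatten_append, hxb, hyb]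

lemma isExpansion_refl (l : List ℤ) : IsExpansion l l := by
  refine ⟨List.replicate l.length 1, by simp, by simp, ?_⟩
  induction l with
  | nil => simp
  | cons a t ih => simpa [List.replicate_succ] using ih

lemma corrCost_cons (a b : ℤ) (t s : List ℤ) :
    corrCost dist (a :: t) (b :: s) = dist a b + corrCost dist t s := by
  simp [corrCost]

lemma corrCost_nonneg (xb yb : List ℤ) : 0 ≤ corrCost dist xb yb := by
  induction xb generalizing yb with
  | nil => simp [corrCost]
  | cons a t ih =>
    cases yb with
    | nil => simp [corrCost]
    | cons b s => rw [corrCost_cons]; exact add_nonneg dist_nonneg (ih s)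

lemma corrCost_append {xb yb : List ℤ} (xb' yb' : List ℤ) (h : xb.length = yb.length) :
    corrCost dist (xb ++ xb') (yb ++ yb') = corrCost dist xb yb + corrCost dist xb' yb' := by
  simp [corrCost, List.zipWith_append h]

lemma corrCost_self (l : List ℤ) : corrCost dist l l = 0 := by
  induction l with
  | nil => simp [corrCost]
  | cons a t ih => rw [corrCost_cons, ih, dist_self, add_zero]

lemma ExC_append {x y x' y' : List ℤ} {c c' : ℝ} (h : ExC x y c) (h' : ExC x' y' c') :
    ExC (x ++ x') (y ++ y') (c + c') := by
  obtain ⟨xb, yb, ⟨he1, he2, hl⟩, hc⟩ := h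
  obtain ⟨xb', yb', ⟨he1', he2', hl'⟩, hc'⟩ := h'
  refine ⟨xb ++ xb', yb ++ yb',
    ⟨isExpansion_append he1 he1', isExpansion_append he2 he2', by simp [hl, hl']⟩, ?_⟩
  rw [corrCost_append _ _ hl]
  exact add_le_add hc hc'

lemma dtw_le_of_ExC {x y : List ℤ} {c : ℝ} (h : ExC x y c) : dtw dist x y ≤ c := by
  obtain ⟨xb, yb, hcorr, hcost⟩ := h
  refine le_trans (csInf_le ?_ ⟨xb, yb, hcorr, rfl⟩) hcost
  refine ⟨0, ?_⟩
  rintro r ⟨xb', yb', _, rfl⟩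
  exact corrCost_nonneg _ _

lemma exZ (a : ℕ) (ha : 0 < a) (b : Bool) : ExC (Zgadget a b) [0, 1, 2] 0 := by
  refine ⟨Zgadget a b, Zgadget a b,
    ⟨isExpansion_refl _, ⟨[a, if b then a else 1, a], by simp, ?_, ?_⟩, rfl⟩, ?_⟩
  · intro k hk
    cases b <;> simp at hk <;> omega
  · cases b <;> simp [Zgadget]
  · rw [corrCost_self]

lemma exZ0 (a : ℕ) (ha : 0 < a) : ExC (Zgadget a false) [0, 2] 1 := by
  refine ⟨Zgadget a false,
    List.replicate a 0 ++ ([2] ++ List.replicate a (2 : ℤ)),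
    ⟨isExpansion_refl _, ⟨[a, a + 1], by simp, ?_, ?_⟩, ?_⟩, ?_⟩
  · intro k hk; simp at hk; omega
  · simp [List.replicate_succ]
  · simp [Zgadget]
  · have hz : Zgadget a false = List.replicate a (0 : ℤ) ++ ([1] ++ List.replicate a 2) := by
      simp [Zgadget]
    rw [hz, corrCost_append _ _ (by simp), corrCost_append _ _ (by simp),
      corrCost_self, corrCost_self, corrCost_cons]
    simp [corrCost, Int.dist_eq]
    norm_num

lemma exAllOnes (a : ℕ) (ha : 0 < a) :
    ∀ (k : ℕ) (x : Fin k → Bool),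
      ExC (Astr a k x) ((List.replicate k ([0, 1, 2] : List ℤ)).flatten) 0 := by
  intro k
  induction k with
  | zero =>
    intro x
    exact ⟨[], [], ⟨⟨[], by simp [Astr], by simp, by simp⟩, ⟨[], by simp, by simp, by simp⟩, rfl⟩,
      by simp [corrCost]⟩
  | succ k ih =>
    intro x
    have hA : Astr a (k + 1) x = Zgadget a (x 0) ++ Astr a k (fun j => x j.succ) := by
      simp [Astr, List.ofFn_succ]
    have hB : (List.replicate (k + 1) ([0, 1, 2] : List ℤ)).flatten =
        [0, 1, 2] ++ (List.replicate k ([0, 1, 2] : List ℤ)).flatten := by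
      simp [List.replicate_succ]
    rw [hA, hB]
    simpa using ExC_append (exZ a ha (x 0)) (ih fun j => x j.succ)

lemma mainExC (a : ℕ) (ha : 0 < a) :
    ∀ (k : ℕ) (x : Fin k → Bool) (i : Fin k), x i = false →
      ExC (Astr a k x) (Bstr k i) 1 := by
  intro k
  induction k with
  | zero => exact fun x i => i.elim0
  | succ k ih =>
    intro x i hi
    have hA : Astr a (k + 1) x = Zgadget a (x 0) ++ Astr a k (fun j => x j.succ) := by
      simp [Astr, List.ofFn_succ]
    rcases Fin.eq_zero_or_eq_succ i with rfl | ⟨j, rfl⟩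
    · have hB : Bstr (k + 1) 0 = ([0, 2] : List ℤ) ++
          (List.replicate k ([0, 1, 2] : List ℤ)).flatten := by
        simp [Bstr]
      rw [hA, hB]
      have h0 : x 0 = false := hi
      have := ExC_append (h0 ▸ exZ0 a ha) (exAllOnes a ha k fun j => x j.succ)
      simpa using this
    · have hk : (k + 1) - 1 - ((j : ℕ) + 1) = k - 1 - (j : ℕ) := by omega
      have hB : Bstr (k + 1) j.succ = ([0, 1, 2] : List ℤ) ++ Bstr k j := by
        simp only [Bstr, Fin.val_succ, hk, List.replicate_succ, List.flatten_cons,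
          List.append_assoc]
      rw [hA, hB]
      have := ExC_append (exZ a ha (x 0)) (ih (fun j => x j.succ) j (by simpa using hi))
      simpa using this


/-- If x_i = 0, then dtw(A(x), B(i)) ≤ 1. -/
theorem dtw_index_zero (a k : ℕ) (ha : 0 < a) (x : Fin k → Bool) (i : Fin k)
    (h : x i = false) :
    dtw dist (Astr a k x) (Bstr k i) ≤ 1 :=
  dtw_le_of_ExC (mainExC a ha k x i h)
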